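/- For any Boolean function f : {-1,1}^n → {-1,1}, ∑_{k∈[n]} −I_k(f)·log I_k(f) ≤ 2·∑_S |S|² f̂(S)², with the convention that terms with I_k(f) = 0 contribute 0 (log denotes natural logarithm, or any fixed base consistent throughout). -/

import Mathlib

open Finset

noncomputable def bSgn (b : Bool) : ℝ := if b then 1 else -1

noncomputable def bChi {n : ℕ} (S : Finset (Fin n)) (x : Fin n → Bool) : ℝ :=
  ∏ i ∈ S, bSgn (x i)

noncomputable def bExpect {n : ℕ} (g : (Fin n → Bool) → ℝ) : ℝ :=
  (∑ x : Fin n → Bool, g x) / 2 ^ n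

noncomputable def bFourier {n : ℕ} (f : (Fin n → Bool) → ℝ) (S : Finset (Fin n)) : ℝ :=
  bExpect fun x => f x * bChi S x

def bFlip1 {n : ℕ} (k : Fin n) (x : Fin n → Bool) : Fin n → Bool :=
  Function.update x k (!(x k))

def bFlipS {n : ℕ} (T : Finset (Fin n)) (x : Fin n → Bool) : Fin n → Bool :=
  fun i => if i ∈ T then !(x i) else x i

/-- combinatorial influence of bit `k` -/
noncomputable def inflC {n : ℕ} (f : (Fin n → Bool) → ℝ) (k : Fin n) : ℝ :=
  bExpect fun x => if f x ≠ f (bFlip1 k x) then 1 else 0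

/-- spectral influence of bit `k` -/
noncomputable def inflS {n : ℕ} (f : (Fin n → Bool) → ℝ) (k : Fin n) : ℝ :=
  ∑ S ∈ univ.filter (fun S : Finset (Fin n) => k ∈ S), bFourier f S ^ 2

/-- total influence (spectral form) -/
noncomputable def totInfl {n : ℕ} (f : (Fin n → Bool) → ℝ) : ℝ :=
  ∑ S : Finset (Fin n), (S.card : ℝ) * bFourier f S ^ 2

/-- spectrum entropy, base 2; terms with zero coefficient contribute 0 -/
noncomputable def specEnt {n : ℕ} (f : (Fin n → Bool) → ℝ) : ℝ :=
  ∑ S : Finset (Fin n), bFourier f S ^ 2 * Real.logb 2 (1 / bFourier f S ^ 2)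

/-- `f` is Boolean (±1)-valued -/
def IsBooleanFn {n : ℕ} (f : (Fin n → Bool) → ℝ) : Prop :=
  ∀ x, f x = 1 ∨ f x = -1

lemma expIneq {t : ℝ} (h1 : t ≤ 1) : Real.exp (t - 1) ≤ (1 + t^2)/2 := by
  have h2 : 1 + (1-t) + (1-t)^2/2 ≤ Real.exp (1-t) := Real.quadratic_le_exp_of_nonneg (by linarith)
  have h3 : Real.exp (t-1) * Real.exp (1-t) = 1 := by
    rw [← Real.exp_add]; norm_num
  have h4 : 0 < Real.exp (t-1) := Real.exp_pos _
  have key : (4:ℝ) ≤ (1 + t^2) * (1 + (1-t) + (1-t)^2/2) * 2 := by nlinarith [sq_nonneg ((1-t)^2), sq_nonneg (1-t)]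
  nlinarith [mul_le_mul_of_nonneg_left h2 (le_of_lt (mul_pos h4 (by positivity : (0:ℝ) < 1 + t^2)))]

noncomputable def Phi (b x : ℝ) : ℝ :=
  (x-b)^2/2 - (x^2*Real.log (x^2) + b^2*Real.log (b^2))/2 + ((x^2+b^2)/2)*Real.log ((x^2+b^2)/2)

lemma Phi_hasDeriv (b : ℝ) {x : ℝ} (hx : 0 < x) (hb : 0 < b) :
    HasDerivAt (Phi b) ((x-b) - (x*Real.log (x^2) + x) + (x*Real.log ((x^2+b^2)/2) + x)) x := by
  have hx2 : (x:ℝ)^2 ≠ 0 := by positivity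
  have hM : ((x^2+b^2)/2 : ℝ) ≠ 0 := by positivity
  have hsq : HasDerivAt (fun y : ℝ => y^2) (2*x) x := by
    simpa using (hasDerivAt_pow 2 x)
  have hlogsq : HasDerivAt (fun y : ℝ => Real.log (y^2)) ((2*x) / (x^2)) x :=
    hsq.log hx2
  have h1 : HasDerivAt (fun y : ℝ => y^2 * Real.log (y^2))
      (2*x*Real.log (x^2) + x^2 * ((2*x) / (x^2))) x := hsq.mul hlogsq
  have hMd : HasDerivAt (fun y : ℝ => (y^2+b^2)/2) (x) x := by
    have := (hsq.add_const (b^2)).div_const 2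
    simpa using this
  have hlogM : HasDerivAt (fun y : ℝ => Real.log ((y^2+b^2)/2)) (x / ((x^2+b^2)/2)) x :=
    hMd.log hM
  have h2 : HasDerivAt (fun y : ℝ => ((y^2+b^2)/2) * Real.log ((y^2+b^2)/2))
      (x*Real.log ((x^2+b^2)/2) + ((x^2+b^2)/2) * (x / ((x^2+b^2)/2))) x := hMd.mul hlogM
  have h0 : HasDerivAt (fun y : ℝ => (y-b)^2/2) (x-b) x := by
    have := ((hasDerivAt_id x).sub_const b).pow 2 |>.div_const 2
    simpa using this
  have := (h0.sub ((h1.add_const (b^2*Real.log (b^2))).div_const 2)).add h2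
  refine this.congr_deriv ?_
  field_simp

lemma Phi_deriv_nonneg (b : ℝ) {x : ℝ} (hb : 0 < b) (hx : b ≤ x) :
    0 ≤ (x-b) - (x*Real.log (x^2) + x) + (x*Real.log ((x^2+b^2)/2) + x) := by
  have hx0 : 0 < x := lt_of_lt_of_le hb hx
  set t := b / x with ht
  have ht0 : 0 < t := div_pos hb hx0
  have ht1 : t ≤ 1 := (div_le_one hx0).2 hx
  have hMx : (x^2+b^2)/2 = x^2 * ((1+t^2)/2) := by
    field_simp [ht]
    rw [ht]; field_simp
  have hlog : Real.log ((x^2+b^2)/2) = Real.log (x^2) + Real.log ((1+t^2)/2) := by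
    rw [hMx, Real.log_mul (by positivity) (by positivity)]
  have hexp : t - 1 ≤ Real.log ((1+t^2)/2) := by
    have := Real.log_le_log (Real.exp_pos _) (expIneq ht1)
    rwa [Real.log_exp] at this
  have hxt : x * t = b := by rw [ht]; field_simp
  have := mul_le_mul_of_nonneg_left hexp (le_of_lt hx0)
  rw [hlog]
  nlinarith
lemma Phi_b_eq (b : ℝ) : Phi b b = 0 := by
  unfold Phi
  have : (b^2+b^2)/2 = b^2 := by ring
  rw [this]; ring

lemma Phi_nonneg (b : ℝ) {a : ℝ} (hb : 0 < b) (ha : b ≤ a) : 0 ≤ Phi b a := by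
  have hmono : MonotoneOn (Phi b) (Set.Ici b) := by
    apply monotoneOn_of_deriv_nonneg (convex_Ici b)
    · intro x hx
      exact (Phi_hasDeriv b (lt_of_lt_of_le hb hx) hb).continuousAt.continuousWithinAt
    · intro x hx
      rw [interior_Ici] at hx
      exact ((Phi_hasDeriv b (lt_trans hb hx) hb).differentiableAt).differentiableWithinAt
    · intro x hx
      rw [interior_Ici] at hx
      rw [(Phi_hasDeriv b (lt_trans hb hx) hb).deriv]
      exact Phi_deriv_nonneg b hb (le_of_lt hx)
  have := hmono (Set.self_mem_Ici) (Set.mem_Ici.2 ha) ha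
  rwa [Phi_b_eq] at this

lemma twoPointAux {a b : ℝ} (hb : 0 ≤ b) (hab : b ≤ a) :
    (a^2*Real.log (a^2) + b^2*Real.log (b^2))/2 - ((a^2+b^2)/2)*Real.log ((a^2+b^2)/2)
      ≤ (a-b)^2/2 := by
  rcases eq_or_lt_of_le hb with hb0 | hb0
  · subst hb0
    rcases eq_or_lt_of_le hab with ha0 | ha0
    · subst ha0
      simp
    · have h2 : Real.log ((a^2+0^2)/2) = Real.log (a^2) - Real.log 2 := by
        rw [show (a^2+0^2)/2 = a^2/2 by ring, Real.log_div (by positivity) two_ne_zero]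
      rw [h2]
      have hl2 : Real.log 2 ≤ 1 := by
        have := Real.log_two_lt_d9
        linarith
      nlinarith [sq_nonneg a, mul_pos ha0 ha0, Real.log_nonneg (by norm_num : (1:ℝ) ≤ 2)]
  · have := Phi_nonneg b hb0 hab
    unfold Phi at this
    linarith

lemma twoPointLSI (a b : ℝ) :
    (a^2*Real.log (a^2) + b^2*Real.log (b^2))/2 - ((a^2+b^2)/2)*Real.log ((a^2+b^2)/2)
      ≤ (a-b)^2/2 := by
  have habs : ((|a|:ℝ)-|b|)^2 ≤ (a-b)^2 := by
    have h1 : |(|a| - |b|)| ≤ |a - b| := abs_abs_sub_abs_le_abs_sub a b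
    calc (|a|-|b|)^2 = |(|a|-|b|)|^2 := (sq_abs _).symm
    _ ≤ |a-b|^2 := by apply pow_le_pow_left₀ (abs_nonneg _) h1
    _ = (a-b)^2 := sq_abs _
  have ha2 : a^2 = |a|^2 := (sq_abs a).symm
  have hb2 : b^2 = |b|^2 := (sq_abs b).symm
  rw [ha2, hb2]
  rcases le_total |b| |a| with h | h
  · exact le_trans (twoPointAux (abs_nonneg b) h) (by linarith)
  · have := twoPointAux (abs_nonneg a) h
    calc (|a|^2*Real.log (|a|^2) + |b|^2*Real.log (|b|^2))/2 - ((|a|^2+|b|^2)/2)*Real.log ((|a|^2+|b|^2)/2)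
        = (|b|^2*Real.log (|b|^2) + |a|^2*Real.log (|a|^2))/2 - ((|b|^2+|a|^2)/2)*Real.log ((|b|^2+|a|^2)/2) := by ring_nf
    _ ≤ (|b|-|a|)^2/2 := this
    _ = (|a|-|b|)^2/2 := by ring
    _ ≤ (a-b)^2/2 := by linarith

lemma bSgn_sq (b : Bool) : bSgn b * bSgn b = 1 := by cases b <;> simp [bSgn]
lemma bSgn_not (b : Bool) : bSgn (!b) = - bSgn b := by cases b <;> simp [bSgn]

lemma bFlip1_apply {n : ℕ} (k : Fin n) (x : Fin n → Bool) (i : Fin n) :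
    bFlip1 k x i = if i = k then !(x k) else x i := Function.update_apply x k (!(x k)) i

lemma bFlip1_invol {n : ℕ} (k : Fin n) (x : Fin n → Bool) : bFlip1 k (bFlip1 k x) = x := by
  funext i
  simp only [bFlip1_apply]
  by_cases h : i = k <;> simp [h]

lemma bFlip1_bijective {n : ℕ} (k : Fin n) : Function.Bijective (bFlip1 (n := n) k) :=
  Function.bijective_iff_has_inverse.2 ⟨bFlip1 k, bFlip1_invol k, bFlip1_invol k⟩

lemma bChi_flip {n : ℕ} (S : Finset (Fin n)) (j : Fin n) (x : Fin n → Bool) :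
    bChi S (bFlip1 j x) = (if j ∈ S then (-1 : ℝ) else 1) * bChi S x := by
  by_cases hj : j ∈ S
  · rw [if_pos hj]
    unfold bChi
    rw [← Finset.mul_prod_erase S _ hj, ← Finset.mul_prod_erase S (fun i => bSgn (x i)) hj]
    have h1 : bSgn (bFlip1 j x j) = - bSgn (x j) := by
      rw [bFlip1_apply]; simp [bSgn_not]
    have h2 : ∀ i ∈ S.erase j, bSgn (bFlip1 j x i) = bSgn (x i) := by
      intro i hi
      rw [bFlip1_apply, if_neg (Finset.ne_of_mem_erase hi)]
    rw [h1, Finset.prod_congr rfl h2]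
    ring
  · rw [if_neg hj, one_mul]
    unfold bChi
    apply Finset.prod_congr rfl
    intro i hi
    rw [bFlip1_apply, if_neg]
    rintro rfl; exact hj hi

lemma bKernel {n : ℕ} (x y : Fin n → Bool) :
    ∑ S : Finset (Fin n), bChi S x * bChi S y = if x = y then (2:ℝ)^n else 0 := by
  have hrw : ∀ S : Finset (Fin n), bChi S x * bChi S y = ∏ i ∈ S, (bSgn (x i) * bSgn (y i)) := by
    intro S; unfold bChi; rw [Finset.prod_mul_distrib]
  simp only [hrw]
  have hpa : ∑ S : Finset (Fin n), ∏ i ∈ S, (bSgn (x i) * bSgn (y i))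
      = ∏ i : Fin n, (bSgn (x i) * bSgn (y i) + 1) := by
    rw [Finset.prod_add]
    rw [← Finset.powerset_univ]
    apply Finset.sum_congr rfl
    intro S _
    simp
  rw [hpa]
  by_cases hxy : x = y
  · subst hxy
    rw [if_pos rfl]
    have : ∀ i : Fin n, bSgn (x i) * bSgn (x i) + 1 = 2 := by
      intro i; rw [bSgn_sq]; norm_num
    rw [Finset.prod_congr rfl (fun i _ => this i), Finset.prod_const]
    simp
  · rw [if_neg hxy]
    have : ∃ i, x i ≠ y i := by
      by_contra hc
      push_neg at hc
      exact hxy (funext hc)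
    obtain ⟨i, hi⟩ := this
    apply Finset.prod_eq_zero (Finset.mem_univ i)
    revert hi
    cases x i <;> cases y i <;> simp [bSgn]

lemma bParseval {n : ℕ} (h : (Fin n → Bool) → ℝ) :
    ∑ S : Finset (Fin n), (bFourier h S)^2 = bExpect (fun x => (h x)^2) := by
  have key : ∑ S : Finset (Fin n), (∑ x : Fin n → Bool, h x * bChi S x) * (∑ y : Fin n → Bool, h y * bChi S y)
      = (2:ℝ)^n * ∑ x : Fin n → Bool, (h x)^2 := by
    have step1 : ∀ S : Finset (Fin n),
        (∑ x : Fin n → Bool, h x * bChi S x) * (∑ y : Fin n → Bool, h y * bChi S y)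
        = ∑ x : Fin n → Bool, ∑ y : Fin n → Bool, (h x * h y) * (bChi S x * bChi S y) := by
      intro S
      rw [Finset.sum_mul_sum]
      apply Finset.sum_congr rfl; intro x _
      apply Finset.sum_congr rfl; intro y _
      ring
    simp only [step1]
    rw [Finset.sum_comm]
    have step2 : ∀ x : Fin n → Bool,
        ∑ S : Finset (Fin n), ∑ y : Fin n → Bool, (h x * h y) * (bChi S x * bChi S y)
        = ∑ y : Fin n → Bool, (h x * h y) * (if x = y then (2:ℝ)^n else 0) := by
      intro x
      rw [Finset.sum_comm]
      apply Finset.sum_congr rfl; intro y _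
      rw [← Finset.mul_sum, bKernel]
    simp only [step2]
    rw [Finset.mul_sum]
    apply Finset.sum_congr rfl
    intro x _
    rw [Finset.sum_eq_single x]
    · simp [pow_two]; ring
    · intro y _ hyx
      rw [if_neg (Ne.symm hyx), mul_zero]
    · intro hx; exact absurd (Finset.mem_univ x) hx
  unfold bFourier bExpect
  simp only [div_pow]
  rw [← Finset.sum_div]
  simp only [pow_two]
  rw [key]
  have h2 : ∀ x : Fin n → Bool, h x * h x = (h x)^2 := fun x => (pow_two (h x)).symm
  rw [Finset.sum_congr rfl (fun x _ => h2 x)]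
  field_simp

lemma bFourier_diff {n : ℕ} (h : (Fin n → Bool) → ℝ) (j : Fin n) (S : Finset (Fin n)) :
    bFourier (fun x => (h x - h (bFlip1 j x))/2) S
      = if j ∈ S then bFourier h S else 0 := by
  have hsum : ∑ x : Fin n → Bool, h (bFlip1 j x) * bChi S x
      = (if j ∈ S then (-1:ℝ) else 1) * ∑ x : Fin n → Bool, h x * bChi S x := by
    rw [Finset.mul_sum]
    rw [← Function.Bijective.sum_comp (bFlip1_bijective j)
      (fun x => (if j ∈ S then (-1:ℝ) else 1) * (h x * bChi S x))]
    apply Finset.sum_congr rfl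
    intro x _
    rw [bChi_flip]
    by_cases hj : j ∈ S <;> simp [hj, bFlip1_invol] <;> ring
  unfold bFourier bExpect
  have : ∀ x, (h x - h (bFlip1 j x))/2 * bChi S x
      = (h x * bChi S x - h (bFlip1 j x) * bChi S x)/2 := by intro x; ring
  simp only [this]
  have e : ∑ x : Fin n → Bool, (h x * bChi S x - h (bFlip1 j x) * bChi S x)/2
      = ((∑ x : Fin n → Bool, h x * bChi S x) - ∑ x : Fin n → Bool, h (bFlip1 j x) * bChi S x)/2 := by
    rw [← Finset.sum_div, Finset.sum_sub_distrib]
  rw [e, hsum]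
  by_cases hj : j ∈ S
  · rw [if_pos hj, if_pos hj]
    ring
  · rw [if_neg hj, if_neg hj]
    ring

-- helper lemmas
lemma bExpect_add {n : ℕ} (g g' : (Fin n → Bool) → ℝ) :
    bExpect (fun x => g x + g' x) = bExpect g + bExpect g' := by
  unfold bExpect; rw [Finset.sum_add_distrib]; ring

lemma bExpect_sub {n : ℕ} (g g' : (Fin n → Bool) → ℝ) :
    bExpect (fun x => g x - g' x) = bExpect g - bExpect g' := by
  unfold bExpect; rw [Finset.sum_sub_distrib]; ring

lemma bExpect_mono {n : ℕ} {g g' : (Fin n → Bool) → ℝ} (h : ∀ x, g x ≤ g' x) :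
    bExpect g ≤ bExpect g' := by
  unfold bExpect
  apply div_le_div_of_nonneg_right ?_ (by positivity)
  · exact Finset.sum_le_sum fun x _ => h x

lemma sum_cons {n : ℕ} (F : (Fin (n+1) → Bool) → ℝ) :
    ∑ x : Fin (n+1) → Bool, F x
      = ∑ y : Fin n → Bool, (F (Fin.cons false y) + F (Fin.cons true y)) := by
  rw [← Equiv.sum_comp (Fin.consEquiv fun _ => Bool) F]
  rw [Fintype.sum_prod_type_right]
  apply Finset.sum_congr rfl
  intro y _
  rw [Fintype.sum_bool]
  simp [Fin.consEquiv]
  ring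

lemma bExpect_succ {n : ℕ} (F : (Fin (n+1) → Bool) → ℝ) :
    bExpect F = bExpect (fun y : Fin n → Bool => (F (Fin.cons false y) + F (Fin.cons true y))/2) := by
  unfold bExpect
  have h : ∑ y : Fin n → Bool, (F (Fin.cons false y) + F (Fin.cons true y))/2
      = (∑ y : Fin n → Bool, (F (Fin.cons false y) + F (Fin.cons true y)))/2 :=
    (Finset.sum_div _ _ _).symm
  rw [sum_cons, h, pow_succ]
  ring

lemma flip_cons_zero {n : ℕ} (b : Bool) (y : Fin n → Bool) :
    bFlip1 (0 : Fin (n+1)) (Fin.cons b y) = Fin.cons (!b) y := by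
  funext i
  refine Fin.cases ?_ (fun j => ?_) i
  · simp [bFlip1]
  · simp [bFlip1, Function.update_apply, Fin.succ_ne_zero]

lemma flip_cons_succ {n : ℕ} (j : Fin n) (b : Bool) (y : Fin n → Bool) :
    bFlip1 j.succ (Fin.cons b y) = Fin.cons b (bFlip1 j y) := by
  funext i
  refine Fin.cases ?_ (fun k => ?_) i
  · simp [bFlip1, Function.update_apply, (Fin.succ_ne_zero j).symm]
  · simp [bFlip1, Function.update_apply, Fin.succ_inj]


lemma sqrtCS (a0 a1 b0 b1 : ℝ) :
    (Real.sqrt ((a0^2+a1^2)/2) - Real.sqrt ((b0^2+b1^2)/2))^2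
      ≤ ((a0-b0)^2 + (a1-b1)^2)/2 := by
  set A := Real.sqrt ((a0^2+a1^2)/2) with hA
  set B := Real.sqrt ((b0^2+b1^2)/2) with hB
  have hA0 : 0 ≤ A := Real.sqrt_nonneg _
  have hB0 : 0 ≤ B := Real.sqrt_nonneg _
  have hA2 : A^2 = (a0^2+a1^2)/2 := Real.sq_sqrt (by positivity)
  have hB2 : B^2 = (b0^2+b1^2)/2 := Real.sq_sqrt (by positivity)
  have hCS : a0*b0 + a1*b1 ≤ 2*A*B := by
    rcases le_total (a0*b0 + a1*b1) 0 with h | h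
    · nlinarith
    · have hsq : (a0*b0+a1*b1)^2 ≤ (2*A*B)^2 := by
        have : (2*A*B)^2 = (a0^2+a1^2)*(b0^2+b1^2) := by
          rw [mul_pow, mul_pow]; rw [hA2, hB2]; ring
        rw [this]
        nlinarith [sq_nonneg (a0*b1 - a1*b0)]
      have h2AB : 0 ≤ 2*A*B := by positivity
      nlinarith
  nlinarith

noncomputable def cubeEnt {n : ℕ} (h : (Fin n → Bool) → ℝ) : ℝ :=
  bExpect (fun x => (h x)^2 * Real.log ((h x)^2))
    - (bExpect fun x => (h x)^2) * Real.log (bExpect fun x => (h x)^2)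

theorem cubeLSI : ∀ (n : ℕ) (h : (Fin n → Bool) → ℝ),
    cubeEnt h ≤ (1/2) * ∑ j, bExpect (fun x => (h x - h (bFlip1 j x))^2) := by
  intro n
  induction n with
  | zero =>
      intro h
      have : ∀ g : (Fin 0 → Bool) → ℝ, bExpect g = g default := by
        intro g
        unfold bExpect
        rw [Fintype.sum_unique]
        · rw [pow_zero, div_one]
          exact congrArg g (Subsingleton.elim _ _)
      unfold cubeEnt
      rw [this, this]
      simp
  | succ n ih =>
      intro h
      set u : (Fin n → Bool) → ℝ :=
        fun y => Real.sqrt (((h (Fin.cons false y))^2 + (h (Fin.cons true y))^2)/2) with hu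
      have hu0 : ∀ y, 0 ≤ u y := fun y => Real.sqrt_nonneg _
      have hu2 : ∀ y, (u y)^2 = ((h (Fin.cons false y))^2 + (h (Fin.cons true y))^2)/2 :=
        fun y => Real.sq_sqrt (by positivity)
      -- decomposition of the two expectations
      have e1 : (bExpect fun x => (h x)^2) = bExpect (fun y => (u y)^2) := by
        rw [bExpect_succ (fun x => (h x)^2)]
        apply congrArg
        funext y
        rw [hu2]
      have e2 : bExpect (fun x => (h x)^2 * Real.log ((h x)^2))
          = bExpect (fun y => ((h (Fin.cons false y))^2 * Real.log ((h (Fin.cons false y))^2)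
              + (h (Fin.cons true y))^2 * Real.log ((h (Fin.cons true y))^2))/2) :=
        bExpect_succ _
      -- chain decomposition
      have chain : cubeEnt h
          = bExpect (fun y => ((h (Fin.cons false y))^2 * Real.log ((h (Fin.cons false y))^2)
              + (h (Fin.cons true y))^2 * Real.log ((h (Fin.cons true y))^2))/2
              - (u y)^2 * Real.log ((u y)^2))
            + cubeEnt u := by
        unfold cubeEnt
        rw [e1, e2, bExpect_sub]
        ring
      -- bound the conditional entropy term by the two-point LSI
      have bound1 : bExpect (fun y => ((h (Fin.cons false y))^2 * Real.log ((h (Fin.cons false y))^2)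
              + (h (Fin.cons true y))^2 * Real.log ((h (Fin.cons true y))^2))/2
              - (u y)^2 * Real.log ((u y)^2))
          ≤ (1/2) * bExpect (fun x => (h x - h (bFlip1 (0 : Fin (n+1)) x))^2) := by
        rw [bExpect_succ (fun x => (h x - h (bFlip1 (0 : Fin (n+1)) x))^2)]
        have key : ∀ y, ((h (Fin.cons false y))^2 * Real.log ((h (Fin.cons false y))^2)
              + (h (Fin.cons true y))^2 * Real.log ((h (Fin.cons true y))^2))/2
              - (u y)^2 * Real.log ((u y)^2)
            ≤ (1/2) * (((h (Fin.cons false y) - h (Fin.cons true y))^2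
                + (h (Fin.cons true y) - h (Fin.cons false y))^2)/2) := by
          intro y
          have := twoPointLSI (h (Fin.cons false y)) (h (Fin.cons true y))
          rw [hu2 y]
          nlinarith [this]
        calc bExpect (fun y => ((h (Fin.cons false y))^2 * Real.log ((h (Fin.cons false y))^2)
              + (h (Fin.cons true y))^2 * Real.log ((h (Fin.cons true y))^2))/2
              - (u y)^2 * Real.log ((u y)^2))
            ≤ bExpect (fun y => (1/2) * (((h (Fin.cons false y) - h (Fin.cons true y))^2
                + (h (Fin.cons true y) - h (Fin.cons false y))^2)/2)) := bExpect_mono key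
          _ = (1/2) * bExpect (fun y => (((h (Fin.cons false y) - h (Fin.cons true y))^2
                + (h (Fin.cons true y) - h (Fin.cons false y))^2)/2)) := by
                unfold bExpect; rw [← Finset.mul_sum]; ring
          _ = (1/2) * bExpect (fun y =>
                ((fun x => (h x - h (bFlip1 (0 : Fin (n+1)) x))^2) (Fin.cons false y)
                + (fun x => (h x - h (bFlip1 (0 : Fin (n+1)) x))^2) (Fin.cons true y))/2) := by
                apply congrArg
                apply congrArg
                funext y
                simp only [flip_cons_zero]
                norm_num
      -- bound cubeEnt u via IH and sqrtCS
      have bound2 : cubeEnt u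
          ≤ (1/2) * ∑ j : Fin n, bExpect (fun x => (h x - h (bFlip1 j.succ x))^2) := by
        refine le_trans (ih u) ?_
        apply mul_le_mul_of_nonneg_left ?_ (by norm_num)
        apply Finset.sum_le_sum
        intro j _
        rw [bExpect_succ (fun x => (h x - h (bFlip1 j.succ x))^2)]
        apply bExpect_mono
        intro y
        have hflip : ∀ b, h (Fin.cons b y) - h (bFlip1 j.succ (Fin.cons b y))
            = h (Fin.cons b y) - h (Fin.cons b (bFlip1 j y)) := by
          intro b; rw [flip_cons_succ]
        have := sqrtCS (h (Fin.cons false y)) (h (Fin.cons true y))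
          (h (Fin.cons false (bFlip1 j y))) (h (Fin.cons true (bFlip1 j y)))
        simp only [flip_cons_succ]
        calc (u y - u (bFlip1 j y))^2
            ≤ ((h (Fin.cons false y) - h (Fin.cons false (bFlip1 j y)))^2
              + (h (Fin.cons true y) - h (Fin.cons true (bFlip1 j y)))^2)/2 := by
              rw [hu]; exact this
          _ = ((h (Fin.cons false y) - h (Fin.cons false (bFlip1 j y)))^2
              + (h (Fin.cons true y) - h (Fin.cons true (bFlip1 j y)))^2)/2 := rfl
      -- combine
      rw [chain, Fin.sum_univ_succ]
      have : (1/2 : ℝ) * (bExpect (fun x => (h x - h (bFlip1 (0:Fin (n+1)) x))^2)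
          + ∑ j : Fin n, bExpect (fun x => (h x - h (bFlip1 j.succ x))^2))
        = (1/2) * bExpect (fun x => (h x - h (bFlip1 (0:Fin (n+1)) x))^2)
          + (1/2) * ∑ j : Fin n, bExpect (fun x => (h x - h (bFlip1 j.succ x))^2) := by ring
      rw [this]
      exact add_le_add bound1 bound2

lemma bExpect_const_mul {n : ℕ} (c : ℝ) (g : (Fin n → Bool) → ℝ) :
    bExpect (fun x => c * g x) = c * bExpect g := by
  unfold bExpect; rw [← Finset.mul_sum]; ring


theorem influence_entropy_bound (n : ℕ) (f : (Fin n → Bool) → ℝ)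
    (hf : IsBooleanFn f) :
    ∑ k : Fin n, -(inflS f k * Real.log (inflS f k))
      ≤ 2 * ∑ S : Finset (Fin n), (S.card : ℝ) ^ 2 * bFourier f S ^ 2 := by
  have main : ∀ k : Fin n, -(inflS f k * Real.log (inflS f k))
      ≤ 2 * ∑ S : Finset (Fin n), (if k ∈ S then (S.card : ℝ) * bFourier f S ^ 2 else 0) := by
    intro k
    set g : (Fin n → Bool) → ℝ := fun x => (f x - f (bFlip1 k x))/2 with hg
    -- Fourier coefficients of g
    have hgF : ∀ S : Finset (Fin n), bFourier g S = if k ∈ S then bFourier f S else 0 :=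
      bFourier_diff f k
    -- p = inflS f k
    have hp : bExpect (fun x => (g x)^2) = inflS f k := by
      rw [← bParseval g]
      unfold inflS
      rw [Finset.sum_filter]
      apply Finset.sum_congr rfl
      intro S _
      rw [hgF S]
      by_cases hk : k ∈ S <;> simp [hk]
    -- g is {-1,0,1}-valued hence g² log g² = 0
    have hzero : bExpect (fun x => (g x)^2 * Real.log ((g x)^2)) = 0 := by
      have : ∀ x, (g x)^2 * Real.log ((g x)^2) = 0 := by
        intro x
        rcases hf x with h1 | h1 <;> rcases hf (bFlip1 k x) with h2 | h2 <;>
          simp [hg, h1, h2] <;> norm_num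
      simp only [this]
      unfold bExpect
      simp
    have hent : cubeEnt g = -(inflS f k * Real.log (inflS f k)) := by
      unfold cubeEnt
      rw [hzero, hp]
      ring
    -- each directional term
    have hterm : ∀ j : Fin n, bExpect (fun x => (g x - g (bFlip1 j x))^2)
        = 4 * ∑ S : Finset (Fin n), (if j ∈ S ∧ k ∈ S then bFourier f S ^ 2 else 0) := by
      intro j
      have e1 : (fun x => (g x - g (bFlip1 j x))^2)
          = fun x => 4 * ((fun z => (g z - g (bFlip1 j z))/2) x)^2 := by
        funext x; ring
      rw [e1, bExpect_const_mul, ← bParseval (fun z => (g z - g (bFlip1 j z))/2)]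
      apply congrArg
      apply Finset.sum_congr rfl
      intro S _
      rw [bFourier_diff g j S, hgF S]
      by_cases hj : j ∈ S <;> by_cases hk : k ∈ S <;> simp [hj, hk]
    calc -(inflS f k * Real.log (inflS f k)) = cubeEnt g := hent.symm
      _ ≤ (1/2) * ∑ j, bExpect (fun x => (g x - g (bFlip1 j x))^2) := cubeLSI n g
      _ = (1/2) * ∑ j : Fin n, 4 * ∑ S : Finset (Fin n), (if j ∈ S ∧ k ∈ S then bFourier f S ^ 2 else 0) := by
          rw [Finset.sum_congr rfl (fun j _ => hterm j)]
      _ = 2 * ∑ j : Fin n, ∑ S : Finset (Fin n), (if j ∈ S ∧ k ∈ S then bFourier f S ^ 2 else 0) := by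
          rw [← Finset.mul_sum]; ring
      _ = 2 * ∑ S : Finset (Fin n), (if k ∈ S then (S.card : ℝ) * bFourier f S ^ 2 else 0) := by
          apply congrArg
          rw [Finset.sum_comm]
          apply Finset.sum_congr rfl
          intro S _
          by_cases hk : k ∈ S
          · simp only [hk, and_true, if_true]
            rw [Finset.sum_ite_mem, Finset.univ_inter, Finset.sum_const, nsmul_eq_mul]
          · simp [hk]
  calc ∑ k : Fin n, -(inflS f k * Real.log (inflS f k))
      ≤ ∑ k : Fin n, 2 * ∑ S : Finset (Fin n), (if k ∈ S then (S.card : ℝ) * bFourier f S ^ 2 else 0) :=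
        Finset.sum_le_sum (fun k _ => main k)
    _ = 2 * ∑ S : Finset (Fin n), (S.card : ℝ)^2 * bFourier f S ^ 2 := by
        rw [← Finset.mul_sum]
        apply congrArg
        rw [Finset.sum_comm]
        apply Finset.sum_congr rfl
        intro S _
        rw [Finset.sum_ite_mem, Finset.univ_inter, Finset.sum_const, nsmul_eq_mul]
        ring
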